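/- Let M ∈ ℝ^{d×d} be a monotone matrix and q ∈ ℝ^d, and define the operator F(z, τ) = (Mz + qτ, −zᵀMz/τ − zᵀq) for (z, τ) ∈ ℝ^d × ℝ with τ > 0. Then F is monotone: for all u = (u_z, u_τ) and w = (w_z, w_τ) with u_τ > 0 and w_τ > 0, one has (F(u) − F(w))ᵀ(u − w) ≥ 0. -/

import Mathlib

open Matrix

/-- The homogeneous feasibility-embedding operator
`F(z, τ) = (Mz + τq, -zᵀMz/τ - zᵀq)` (for `τ > 0`) is monotone when `M` is a
monotone matrix. -/
theorem feasibility_embedding_monotone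
    {d : ℕ} (M : Matrix (Fin d) (Fin d) ℝ) (q : Fin d → ℝ)
    (hM : (M + Mᵀ).PosSemidef)
    (uz wz : Fin d → ℝ) (uτ wτ : ℝ) (huτ : 0 < uτ) (hwτ : 0 < wτ) :
    ((M *ᵥ uz + uτ • q) - (M *ᵥ wz + wτ • q)) ⬝ᵥ (uz - wz) +
      ((-(uz ⬝ᵥ (M *ᵥ uz)) / uτ - uz ⬝ᵥ q) -
        (-(wz ⬝ᵥ (M *ᵥ wz)) / wτ - wz ⬝ᵥ q)) * (uτ - wτ) ≥ 0 := by
  have hmono : ∀ v : Fin d → ℝ, 0 ≤ v ⬝ᵥ (M *ᵥ v) := by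
    intro v
    have h := hM.dotProduct_mulVec_nonneg v
    simp only [Matrix.add_mulVec, dotProduct_add, star_trivial, RCLike.re_to_real] at h
    have h2 : v ⬝ᵥ (Mᵀ *ᵥ v) = v ⬝ᵥ (M *ᵥ v) :=
      calc v ⬝ᵥ (Mᵀ *ᵥ v) = (M *ᵥ v) ⬝ᵥ v := by
            rw [Matrix.dotProduct_mulVec, Matrix.vecMul_transpose]
        _ = v ⬝ᵥ (M *ᵥ v) := dotProduct_comm _ _
    linarith
  have hv := hmono (wτ • uz - uτ • wz)
  have hexp : (wτ • uz - uτ • wz) ⬝ᵥ (M *ᵥ (wτ • uz - uτ • wz)) =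
      wτ*wτ*(uz ⬝ᵥ (M *ᵥ uz)) - wτ*uτ*(uz ⬝ᵥ (M *ᵥ wz))
        - uτ*wτ*(wz ⬝ᵥ (M *ᵥ uz)) + uτ*uτ*(wz ⬝ᵥ (M *ᵥ wz)) := by
    simp only [Matrix.mulVec_sub, Matrix.mulVec_smul, dotProduct_sub, sub_dotProduct,
      smul_dotProduct, dotProduct_smul, smul_eq_mul]
    ring
  rw [hexp] at hv
  have hq1 : (uτ • q) ⬝ᵥ (uz - wz) = uτ * (uz ⬝ᵥ q) - uτ * (wz ⬝ᵥ q) := by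
    simp only [dotProduct_sub, smul_dotProduct, smul_eq_mul]
    rw [dotProduct_comm q uz, dotProduct_comm q wz]
  have hq2 : (wτ • q) ⬝ᵥ (uz - wz) = wτ * (uz ⬝ᵥ q) - wτ * (wz ⬝ᵥ q) := by
    simp only [dotProduct_sub, smul_dotProduct, smul_eq_mul]
    rw [dotProduct_comm q uz, dotProduct_comm q wz]
  have hm : (M *ᵥ uz - M *ᵥ wz) ⬝ᵥ (uz - wz) =
      uz ⬝ᵥ (M *ᵥ uz) - wz ⬝ᵥ (M *ᵥ uz) - uz ⬝ᵥ (M *ᵥ wz) + wz ⬝ᵥ (M *ᵥ wz) := by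
    simp only [dotProduct_sub, sub_dotProduct]
    rw [dotProduct_comm (M *ᵥ uz) uz, dotProduct_comm (M *ᵥ uz) wz,
      dotProduct_comm (M *ᵥ wz) uz, dotProduct_comm (M *ᵥ wz) wz]
    ring
  have hsplit : ((M *ᵥ uz + uτ • q) - (M *ᵥ wz + wτ • q)) ⬝ᵥ (uz - wz)
      = (M *ᵥ uz - M *ᵥ wz) ⬝ᵥ (uz - wz) + (uτ • q) ⬝ᵥ (uz - wz) - (wτ • q) ⬝ᵥ (uz - wz) := by
    simp only [sub_dotProduct, add_dotProduct]
    ring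
  rw [hsplit, hq1, hq2, hm]
  set A := uz ⬝ᵥ (M *ᵥ uz)
  set B := wz ⬝ᵥ (M *ᵥ wz)
  set C1 := uz ⬝ᵥ (M *ᵥ wz)
  set C2 := wz ⬝ᵥ (M *ᵥ uz)
  rw [ge_iff_le, ← sub_nonneg]
  have key : (A - C2 - C1 + B + (uτ * (uz ⬝ᵥ q) - uτ * (wz ⬝ᵥ q)) -
        (wτ * (uz ⬝ᵥ q) - wτ * (wz ⬝ᵥ q)) +
        (-A / uτ - uz ⬝ᵥ q - (-B / wτ - wz ⬝ᵥ q)) * (uτ - wτ)) - 0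
      = (wτ*wτ*A - wτ*uτ*C1 - uτ*wτ*C2 + uτ*uτ*B) / (uτ * wτ) := by
    field_simp
    ring
  rw [key]
  positivity
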